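/- In Ω = Aut(T), two first-level-inactive elements (u,v) and (u',v') are conjugate in Ω if and only if either (u is conjugate to u' and v is conjugate to v') or (u is conjugate to v' and v is conjugate to u'). -/

import Mathlib

open Equiv

/-- Vertices of the infinite rooted binary tree: finite words over `Bool`.
The parent of a nonempty word is `dropLast`. -/
abbrev Wd := List Bool

/-- The group `Ω = Aut(T)` of automorphisms of the infinite rooted binary tree,
realized as the subgroup of permutations of the vertex set preserving length
(levels) and the parent relation. -/
def OmegaSG : Subgroup (Equiv.Perm Wd) where
  carrier := {σ | (∀ w, (σ w).length = w.length) ∧ ∀ w, (σ w).dropLast = σ w.dropLast}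
  one_mem' := ⟨fun _ => rfl, fun _ => rfl⟩
  mul_mem' := by
    rintro σ τ ⟨hσl, hσd⟩ ⟨hτl, hτd⟩
    refine ⟨fun w => ?_, fun w => ?_⟩
    · simp [Equiv.Perm.mul_apply, hσl, hτl]
    · simp [Equiv.Perm.mul_apply, hσd, hτd]
  inv_mem' := by
    rintro σ ⟨hl, hd⟩
    refine ⟨fun w => ?_, fun w => ?_⟩
    · have := hl (σ⁻¹ w)
      rw [show σ (σ⁻¹ w) = w from σ.apply_symm_apply w] at this
      exact this.symm
    · apply σ.injective
      have := hd (σ⁻¹ w)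
      rw [show σ (σ⁻¹ w) = w from σ.apply_symm_apply w] at this
      rw [← this]
      simp

/-- The section pairing: `(u,v)` acts as `u` on the subtree rooted at `false`
and as `v` on the subtree rooted at `true`. -/
def pairFun (f g : Wd → Wd) : Wd → Wd
  | [] => []
  | false :: w => false :: f w
  | true :: w => true :: g w

@[simp] lemma pairFun_nil (f g : Wd → Wd) : pairFun f g [] = [] := rfl
@[simp] lemma pairFun_false (f g : Wd → Wd) (w : Wd) :
    pairFun f g (false :: w) = false :: f w := rfl
@[simp] lemma pairFun_true (f g : Wd → Wd) (w : Wd) :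
    pairFun f g (true :: w) = true :: g w := rfl

lemma pairFun_comp (f g f' g' : Wd → Wd) (hf : ∀ w, f (f' w) = w) (hg : ∀ w, g (g' w) = w) :
    ∀ w, pairFun f g (pairFun f' g' w) = w := by
  rintro (_ | ⟨(_|_), w⟩) <;> simp [hf, hg]

/-- The permutation `(u,v)` of the tree. -/
def pairPerm (u v : Equiv.Perm Wd) : Equiv.Perm Wd where
  toFun := pairFun u v
  invFun := pairFun u.symm v.symm
  left_inv := pairFun_comp _ _ _ _ (fun w => u.symm_apply_apply w) (fun w => v.symm_apply_apply w)
  right_inv := pairFun_comp _ _ _ _ (fun w => u.apply_symm_apply w) (fun w => v.apply_symm_apply w)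

@[simp] lemma pairPerm_apply (u v : Equiv.Perm Wd) (w : Wd) :
    pairPerm u v w = pairFun u v w := rfl

/-- The first-level swap `σ`. -/
def swapPerm : Equiv.Perm Wd where
  toFun w := match w with | [] => [] | b :: w => (!b) :: w
  invFun w := match w with | [] => [] | b :: w => (!b) :: w
  left_inv := by rintro (_ | ⟨b, w⟩) <;> simp
  right_inv := by rintro (_ | ⟨b, w⟩) <;> simp

@[simp] lemma swapPerm_nil : swapPerm [] = [] := rfl
@[simp] lemma swapPerm_cons (b : Bool) (w : Wd) : swapPerm (b :: w) = (!b) :: w := rfl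

lemma swapPerm_mem : swapPerm ∈ OmegaSG := by
  constructor
  · rintro (_ | ⟨b, w⟩) <;> simp
  · rintro (_ | ⟨b, w⟩)
    · simp
    · rcases eq_or_ne w [] with rfl | hw
      · simp
      · simp only [swapPerm_cons, List.dropLast_cons_of_ne_nil hw]

lemma mem_omega_length {u : Equiv.Perm Wd} (hu : u ∈ OmegaSG) (w : Wd) :
    (u w).length = w.length := hu.1 w

lemma mem_omega_ne_nil {u : Equiv.Perm Wd} (hu : u ∈ OmegaSG) {w : Wd} (hw : w ≠ []) :
    u w ≠ [] := by
  intro h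
  exact hw (List.eq_nil_of_length_eq_zero (by rw [← hu.1 w, h]; rfl))

lemma mem_omega_nil {u : Equiv.Perm Wd} (hu : u ∈ OmegaSG) : u [] = [] :=
  List.eq_nil_of_length_eq_zero (hu.1 [])

lemma pairPerm_mem {u v : Equiv.Perm Wd} (hu : u ∈ OmegaSG) (hv : v ∈ OmegaSG) :
    pairPerm u v ∈ OmegaSG := by
  constructor
  · rintro (_ | ⟨(_|_), w⟩) <;> simp [hu.1, hv.1]
  · rintro (_ | ⟨(_|_), w⟩)
    · simp
    · rcases eq_or_ne w [] with rfl | hw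
      · simp [mem_omega_nil hu]
      · simp only [pairPerm_apply, pairFun_false, List.dropLast_cons_of_ne_nil hw,
          List.dropLast_cons_of_ne_nil (mem_omega_ne_nil hu hw)]
        rw [hu.2]
    · rcases eq_or_ne w [] with rfl | hw
      · simp [mem_omega_nil hv]
      · simp only [pairPerm_apply, pairFun_true, List.dropLast_cons_of_ne_nil hw,
          List.dropLast_cons_of_ne_nil (mem_omega_ne_nil hv hw)]
        rw [hv.2]

/-- `(u,v)` as an element of `Ω`. -/
def pairOm (u v : OmegaSG) : OmegaSG := ⟨pairPerm u.1 v.1, pairPerm_mem u.2 v.2⟩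

/-- `σ` as an element of `Ω`. -/
def swapOm : OmegaSG := ⟨swapPerm, swapPerm_mem⟩

/-! ### Levels, restriction, sign, odometers -/

/-- Level `n` of the tree: words of length `n`. -/
abbrev Lv (n : ℕ) := {w : Wd // w.length = n}

instance fintypeLv (n : ℕ) : Fintype (Lv n) := by
  apply Fintype.ofSurjective (fun g : Fin n → Bool => (⟨List.ofFn g, List.length_ofFn⟩ : Lv n))
  rintro ⟨w, rfl⟩
  exact ⟨w.get, Subtype.ext (List.ofFn_get w)⟩

/-- The permutation induced by `g ∈ Ω` on level `n`. -/
def levelPerm (n : ℕ) (g : OmegaSG) : Equiv.Perm (Lv n) where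
  toFun w := ⟨g.1 w.1, by rw [mem_omega_length g.2, w.2]⟩
  invFun w := ⟨(g⁻¹ : OmegaSG).1 w.1, by rw [mem_omega_length (g⁻¹ : OmegaSG).2, w.2]⟩
  left_inv w := Subtype.ext (by simp)
  right_inv w := Subtype.ext (by simp)

/-- Restriction to level `n` as a group homomorphism. -/
def levelHom (n : ℕ) : OmegaSG →* Equiv.Perm (Lv n) where
  toFun := levelPerm n
  map_one' := Equiv.ext fun w => Subtype.ext rfl
  map_mul' g h := Equiv.ext fun w => Subtype.ext rfl

/-- `sgn_n`: the sign of the permutation induced on level `n`. -/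
noncomputable def sgn (n : ℕ) (g : OmegaSG) : ℤˣ := Equiv.Perm.sign (levelPerm n g)

/-- An odometer: an element acting transitively on every level of the tree. -/
def IsOdometer (g : OmegaSG) : Prop :=
  ∀ n : ℕ, ∀ v w : Lv n, ∃ k : ℤ, ((g ^ k : OmegaSG) : Equiv.Perm Wd) v.1 = w.1

/-! ### The profinite topology on `Aut(T)` -/

instance : TopologicalSpace Wd := ⊥
instance : DiscreteTopology Wd := ⟨rfl⟩
instance : TopologicalSpace (Equiv.Perm Wd) :=
  TopologicalSpace.induced (fun g => (g : Wd → Wd)) Pi.topologicalSpace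

lemma continuous_permCoe : Continuous (fun g : Equiv.Perm Wd => (g : Wd → Wd)) :=
  continuous_induced_dom

lemma continuous_permApply (w : Wd) : Continuous fun g : Equiv.Perm Wd => g w :=
  (continuous_apply w).comp continuous_permCoe

instance : IsTopologicalGroup (Equiv.Perm Wd) where
  continuous_mul := by
    apply continuous_induced_rng.2
    apply continuous_pi
    intro w
    rw [continuous_discrete_rng]
    intro y
    have h : (fun p : Equiv.Perm Wd × Equiv.Perm Wd => ((p.1 * p.2 : Equiv.Perm Wd) : Wd → Wd) w) ⁻¹' {y}
        = ⋃ x : Wd, {p : Equiv.Perm Wd × Equiv.Perm Wd | p.2 w = x} ∩ {p | p.1 x = y} := by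
      ext p
      simp only [Set.mem_preimage, Set.mem_singleton_iff, Set.mem_iUnion, Set.mem_inter_iff,
        Set.mem_setOf_eq, Equiv.Perm.mul_apply]
      constructor
      · intro hh; exact ⟨p.2 w, rfl, hh⟩
      · rintro ⟨x, rfl, hh⟩; exact hh
    show IsOpen ((fun p : Equiv.Perm Wd × Equiv.Perm Wd =>
      ((p.1 * p.2 : Equiv.Perm Wd) : Wd → Wd) w) ⁻¹' {y})
    rw [h]
    refine isOpen_iUnion fun x => IsOpen.inter ?_ ?_
    · exact IsOpen.preimage ((continuous_permApply w).comp continuous_snd) (isOpen_discrete {x})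
    · exact IsOpen.preimage ((continuous_permApply x).comp continuous_fst) (isOpen_discrete {y})
  continuous_inv := by
    apply continuous_induced_rng.2
    apply continuous_pi
    intro w
    rw [continuous_discrete_rng]
    intro y
    have h : (fun g : Equiv.Perm Wd => ((g⁻¹ : Equiv.Perm Wd) : Wd → Wd) w) ⁻¹' {y}
        = {g : Equiv.Perm Wd | g y = w} := by
      ext g
      simp only [Set.mem_preimage, Set.mem_singleton_iff, Set.mem_setOf_eq]
      constructor
      · rintro rfl; simp
      · intro hh; rw [← hh]; simp
    show IsOpen ((fun g : Equiv.Perm Wd => ((g⁻¹ : Equiv.Perm Wd) : Wd → Wd) w) ⁻¹' {y})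
    rw [h]
    exact IsOpen.preimage (continuous_permApply y) (isOpen_discrete {w})

/-! ### The recursive generators `a₁ = σ`, `a₂ = (a₃⁻¹, a₂⁻¹)σ`, `a₃ = (a₂, a₃)` -/

mutual
  /-- The underlying function of `a₂`. -/
  def pA : Wd → Wd
    | [] => []
    | false :: w => true :: piA w
    | true :: w => false :: qiA w
  /-- The underlying function of `a₃`. -/
  def qA : Wd → Wd
    | [] => []
    | false :: w => false :: pA w
    | true :: w => true :: qA w
  /-- The underlying function of `a₂⁻¹`. -/
  def piA : Wd → Wd
    | [] => []
    | false :: w => true :: qA w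
    | true :: w => false :: pA w
  /-- The underlying function of `a₃⁻¹`. -/
  def qiA : Wd → Wd
    | [] => []
    | false :: w => false :: piA w
    | true :: w => true :: qiA w
end

lemma a_inv_lemma : ∀ w : Wd, pA (piA w) = w ∧ piA (pA w) = w ∧ qA (qiA w) = w ∧ qiA (qA w) = w := by
  intro w
  induction w with
  | nil => simp [pA, qA, piA, qiA]
  | cons b w ih =>
    cases b <;>
      simp [pA, qA, piA, qiA, ih.1, ih.2.1, ih.2.2.1, ih.2.2.2]

/-- The generator `a₂`. -/
def a2 : Equiv.Perm Wd where
  toFun := pA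
  invFun := piA
  left_inv w := (a_inv_lemma w).2.1
  right_inv w := (a_inv_lemma w).1

/-- The generator `a₃`. -/
def a3 : Equiv.Perm Wd where
  toFun := qA
  invFun := qiA
  left_inv w := (a_inv_lemma w).2.2.2
  right_inv w := (a_inv_lemma w).2.2.1

lemma a_length_lemma : ∀ w : Wd, (pA w).length = w.length ∧ (qA w).length = w.length ∧
    (piA w).length = w.length ∧ (qiA w).length = w.length := by
  intro w
  induction w with
  | nil => simp [pA, qA, piA, qiA]
  | cons b w ih =>
    cases b <;>
      simp [pA, qA, piA, qiA, ih.1, ih.2.1, ih.2.2.1, ih.2.2.2]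

lemma a_ne_nil {f : Wd → Wd} (hf : ∀ w : Wd, (f w).length = w.length) {w : Wd} (hw : w ≠ []) :
    f w ≠ [] := by
  intro h
  exact hw (List.eq_nil_of_length_eq_zero (by rw [← hf w, h]; rfl))

lemma a_dropLast_lemma : ∀ w : Wd, (pA w).dropLast = pA w.dropLast ∧
    (qA w).dropLast = qA w.dropLast ∧ (piA w).dropLast = piA w.dropLast ∧
    (qiA w).dropLast = qiA w.dropLast := by
  intro w
  induction w with
  | nil => simp [pA, qA, piA, qiA]
  | cons b w ih =>
    rcases eq_or_ne w [] with rfl | hw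
    · cases b <;> simp [pA, qA, piA, qiA]
    · have hp := a_ne_nil (fun w => (a_length_lemma w).1) hw
      have hq := a_ne_nil (fun w => (a_length_lemma w).2.1) hw
      have hpi := a_ne_nil (fun w => (a_length_lemma w).2.2.1) hw
      have hqi := a_ne_nil (fun w => (a_length_lemma w).2.2.2) hw
      cases b <;>
        simp [pA, qA, piA, qiA, List.dropLast_cons_of_ne_nil hw,
          List.dropLast_cons_of_ne_nil hp, List.dropLast_cons_of_ne_nil hq,
          List.dropLast_cons_of_ne_nil hpi, List.dropLast_cons_of_ne_nil hqi,
          ih.1, ih.2.1, ih.2.2.1, ih.2.2.2]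

lemma a2_mem : a2 ∈ OmegaSG :=
  ⟨fun w => (a_length_lemma w).1, fun w => (a_dropLast_lemma w).1⟩

lemma a3_mem : a3 ∈ OmegaSG :=
  ⟨fun w => (a_length_lemma w).2.1, fun w => (a_dropLast_lemma w).2.1⟩

/-- `a₁ = σ` as an element of `Ω`. -/
def A1 : OmegaSG := swapOm
/-- `a₂` as an element of `Ω`. -/
def A2 : OmegaSG := ⟨a2, a2_mem⟩
/-- `a₃` as an element of `Ω`. -/
def A3 : OmegaSG := ⟨a3, a3_mem⟩

/-- `G = ⟨⟨a₁, a₃⟩⟩`, the topological closure of the subgroup generated by `a₁` and `a₃`: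
a model of the geometric iterated monodromy group of `f(x) = 2/(x-1)²`. -/
noncomputable def Ggrp : Subgroup OmegaSG :=
  (Subgroup.closure {A1, A3}).topologicalClosure

/-- The normal closure in `G` of the closed subgroup generated by an element `c`:
the closed subgroup generated by all `G`-conjugates of `c`. -/
noncomputable def nclG (c : OmegaSG) : Subgroup OmegaSG :=
  (Subgroup.closure {x | ∃ g ∈ Ggrp, x = g * c * g⁻¹}).topologicalClosure

/-- `U`, the normal closure in `G` of `⟨⟨a₂a₃⁻¹⟩⟩`. -/
noncomputable def Ugrp : Subgroup OmegaSG := nclG (A2 * A3⁻¹)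

/-- `H₁`, the normal closure in `G` of `⟨⟨a₁⟩⟩`. -/
noncomputable def H1grp : Subgroup OmegaSG := nclG A1

/-- `H₃`, the normal closure in `G` of `⟨⟨a₃⟩⟩`. -/
noncomputable def H3grp : Subgroup OmegaSG := nclG A3

/-! ### Auxiliary lemmas for Statement 2 -/

lemma pairOm_mul (a b c d : OmegaSG) : pairOm a b * pairOm c d = pairOm (a * c) (b * d) := by
  apply Subtype.ext; apply Equiv.ext
  rintro (_ | ⟨(_|_), w⟩) <;> rfl

lemma pairOm_one : pairOm 1 1 = 1 := by
  apply Subtype.ext; apply Equiv.ext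
  rintro (_ | ⟨(_|_), w⟩) <;> rfl

lemma pairOm_inv (a b : OmegaSG) : (pairOm a b)⁻¹ = pairOm a⁻¹ b⁻¹ :=
  inv_eq_of_mul_eq_one_right
    (by rw [pairOm_mul, mul_inv_cancel, mul_inv_cancel, pairOm_one])

lemma pairOm_inj {a b c d : OmegaSG} (h : pairOm a b = pairOm c d) : a = c ∧ b = d := by
  constructor <;> apply Subtype.ext <;> apply Equiv.ext <;> intro w
  · have := congrArg (fun e : OmegaSG => e.1 (false :: w)) h
    simpa [pairOm] using this
  · have := congrArg (fun e : OmegaSG => e.1 (true :: w)) h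
    simpa [pairOm] using this

lemma swapOm_sq : swapOm * swapOm = 1 := by
  apply Subtype.ext; apply Equiv.ext
  rintro (_ | ⟨b, w⟩) <;> simp [swapOm, Equiv.Perm.mul_apply]

lemma swapOm_inv : swapOm⁻¹ = swapOm := inv_eq_of_mul_eq_one_right swapOm_sq

lemma swap_conj (u v : OmegaSG) : swapOm * pairOm u v * swapOm = pairOm v u := by
  apply Subtype.ext; apply Equiv.ext
  rintro (_ | ⟨(_|_), w⟩) <;> rfl

lemma pair_conj (a b u v : OmegaSG) :
    pairOm a b * pairOm u v * (pairOm a b)⁻¹ = pairOm (a * u * a⁻¹) (b * v * b⁻¹) := by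
  rw [pairOm_inv, pairOm_mul, pairOm_mul]

lemma pairswap_conj (a b u v : OmegaSG) :
    (pairOm a b * swapOm) * pairOm u v * (pairOm a b * swapOm)⁻¹ =
      pairOm (a * v * a⁻¹) (b * u * b⁻¹) := by
  rw [mul_inv_rev, swapOm_inv]
  have h : pairOm a b * swapOm * pairOm u v * (swapOm * (pairOm a b)⁻¹)
      = pairOm a b * (swapOm * pairOm u v * swapOm) * (pairOm a b)⁻¹ := by group
  rw [h, swap_conj, pair_conj]

lemma omega_dropLast_iter {g : Equiv.Perm Wd} (hg : g ∈ OmegaSG) (m : ℕ) (w : Wd) :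
    List.dropLast^[m] (g w) = g (List.dropLast^[m] w) := by
  induction m generalizing w with
  | zero => rfl
  | succ m ih =>
    rw [Function.iterate_succ_apply', Function.iterate_succ_apply', ih, hg.2]

lemma iterate_dropLast_eq_take (m : ℕ) (l : Wd) :
    List.dropLast^[m] l = l.take (l.length - m) := by
  induction m with
  | zero => simp
  | succ m ih =>
    rw [Function.iterate_succ_apply', ih, List.dropLast_eq_take, List.length_take,
      List.take_take]
    congr 1
    omega

lemma omega_take_one {g : Equiv.Perm Wd} (hg : g ∈ OmegaSG) (b : Bool) (w : Wd) :
    (g (b :: w)).take 1 = g [b] := by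
  have h1 := omega_dropLast_iter hg w.length (b :: w)
  rw [iterate_dropLast_eq_take, iterate_dropLast_eq_take] at h1
  simpa [mem_omega_length hg] using h1

lemma omega_cons {g : Equiv.Perm Wd} (hg : g ∈ OmegaSG) {b c : Bool} (hc : g [b] = [c])
    (w : Wd) : g (b :: w) = c :: (g (b :: w)).tail := by
  have h := omega_take_one hg b w
  rw [hc] at h
  cases hgw : g (b :: w) with
  | nil => exact absurd hgw (mem_omega_ne_nil hg (by simp))
  | cons x t =>
    have h1 : x = c := by
      rw [hgw] at h
      simpa using h
    rw [h1, List.tail_cons]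

lemma inv_fix {g : OmegaSG} {b : Bool} (hb : g.1 [b] = [b]) : (g⁻¹ : OmegaSG).1 [b] = [b] := by
  have : (g⁻¹ : OmegaSG).1 = (g.1)⁻¹ := rfl
  rw [this, Equiv.Perm.inv_def, Equiv.symm_apply_eq]
  exact hb.symm

lemma exists_pair (g : OmegaSG) (hf : g.1 [false] = [false]) (ht : g.1 [true] = [true]) :
    ∃ a b : OmegaSG, g = pairOm a b := by
  have hif : (g⁻¹ : OmegaSG).1 [false] = [false] := inv_fix hf
  have hit : (g⁻¹ : OmegaSG).1 [true] = [true] := inv_fix ht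
  have hginv : ∀ w, (g⁻¹ : OmegaSG).1 (g.1 w) = w := fun w => g.1.symm_apply_apply w
  have hinvg : ∀ w, g.1 ((g⁻¹ : OmegaSG).1 w) = w := fun w => g.1.apply_symm_apply w
  -- the two sections
  have mkSec : ∀ (c : Bool), g.1 [c] = [c] → (g⁻¹ : OmegaSG).1 [c] = [c] →
      ∃ a : OmegaSG, ∀ w, g.1 (c :: w) = c :: a.1 w := by
    intro c hc hc'
    have linv : Function.LeftInverse (fun w => ((g⁻¹ : OmegaSG).1 (c :: w)).tail)
        (fun w => (g.1 (c :: w)).tail) := by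
      intro w
      show ((g⁻¹ : OmegaSG).1 (c :: (g.1 (c :: w)).tail)).tail = w
      rw [← omega_cons g.2 hc w, hginv, List.tail_cons]
    have rinv : Function.RightInverse (fun w => ((g⁻¹ : OmegaSG).1 (c :: w)).tail)
        (fun w => (g.1 (c :: w)).tail) := by
      intro w
      show (g.1 (c :: ((g⁻¹ : OmegaSG).1 (c :: w)).tail)).tail = w
      rw [← omega_cons g⁻¹.2 hc' w, hinvg, List.tail_cons]
    have hlen : ∀ w : Wd, ((g.1 (c :: w)).tail).length = w.length := by
      intro w
      have hl := mem_omega_length g.2 (c :: w)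
      rw [omega_cons g.2 hc w] at hl
      simpa using hl
    have hdrop : ∀ w : Wd, ((g.1 (c :: w)).tail).dropLast = (g.1 (c :: w.dropLast)).tail := by
      intro w
      rcases eq_or_ne w [] with rfl | hw
      · simp [hc]
      · have h1 := omega_cons g.2 hc w
        have h2 : (g.1 (c :: w)).dropLast = g.1 (c :: w.dropLast) := by
          rw [g.2.2 (c :: w), List.dropLast_cons_of_ne_nil hw]
        have htne : (g.1 (c :: w)).tail ≠ [] := by
          intro hnil
          have hl := hlen w
          rw [hnil] at hl
          exact hw (List.eq_nil_of_length_eq_zero hl.symm)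
        calc ((g.1 (c :: w)).tail).dropLast
            = ((c :: (g.1 (c :: w)).tail).dropLast).tail := by
              rw [List.dropLast_cons_of_ne_nil htne, List.tail_cons]
          _ = ((g.1 (c :: w)).dropLast).tail := by rw [← h1]
          _ = (g.1 (c :: w.dropLast)).tail := by rw [h2]
    refine ⟨⟨⟨fun w => (g.1 (c :: w)).tail, fun w => ((g⁻¹ : OmegaSG).1 (c :: w)).tail,
      linv, rinv⟩, hlen, hdrop⟩, fun w => omega_cons g.2 hc w⟩
  obtain ⟨a, ha⟩ := mkSec false hf hif
  obtain ⟨b, hb⟩ := mkSec true ht hit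
  refine ⟨a, b, ?_⟩
  apply Subtype.ext; apply Equiv.ext
  rintro (_ | ⟨(_|_), w⟩)
  · exact mem_omega_nil g.2
  · exact ha w
  · exact hb w

lemma exists_decomp (g : OmegaSG) :
    (∃ a b : OmegaSG, g = pairOm a b) ∨ (∃ a b : OmegaSG, g = pairOm a b * swapOm) := by
  obtain ⟨c, hc⟩ := List.length_eq_one_iff.mp (mem_omega_length g.2 [false])
  obtain ⟨d, hd⟩ := List.length_eq_one_iff.mp (mem_omega_length g.2 [true])
  have hcd : c ≠ d := by
    intro h
    have : g.1 [false] = g.1 [true] := by rw [hc, hd, h]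
    simpa using g.1.injective this
  cases c with
  | false =>
    left
    have hd' : d = true := by cases d <;> simp_all
    exact exists_pair g hc (hd' ▸ hd)
  | true =>
    right
    have hd' : d = false := by cases d <;> simp_all
    have h1 : (g * swapOm).1 [false] = [false] := by
      show g.1 (swapPerm [false]) = [false]
      simpa using hd' ▸ hd
    have h2 : (g * swapOm).1 [true] = [true] := by
      show g.1 (swapPerm [true]) = [true]
      simpa using hc
    obtain ⟨a, b, hab⟩ := exists_pair (g * swapOm) h1 h2
    exact ⟨a, b, by rw [← hab, mul_assoc, swapOm_sq, mul_one]⟩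

/-- In `Ω = Aut(T)`, `(u,v)` and `(u',v')` are conjugate iff
(`u ~ u'` and `v ~ v'`) or (`u ~ v'` and `v ~ u'`). -/
theorem stmt2 (u v u' v' : OmegaSG) :
    IsConj (pairOm u v) (pairOm u' v') ↔
      (IsConj u u' ∧ IsConj v v') ∨ (IsConj u v' ∧ IsConj v u') := by
  constructor
  · intro h
    obtain ⟨t, ht⟩ := isConj_iff.mp h
    rcases exists_decomp t with ⟨a, b, rfl⟩ | ⟨a, b, rfl⟩
    · rw [pair_conj] at ht
      obtain ⟨h1, h2⟩ := pairOm_inj ht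
      exact Or.inl ⟨isConj_iff.mpr ⟨a, h1⟩, isConj_iff.mpr ⟨b, h2⟩⟩
    · rw [pairswap_conj] at ht
      obtain ⟨h1, h2⟩ := pairOm_inj ht
      exact Or.inr ⟨isConj_iff.mpr ⟨b, h2⟩, isConj_iff.mpr ⟨a, h1⟩⟩
  · rintro (⟨h1, h2⟩ | ⟨h1, h2⟩)
    · obtain ⟨a, ha⟩ := isConj_iff.mp h1
      obtain ⟨b, hb⟩ := isConj_iff.mp h2
      exact isConj_iff.mpr ⟨pairOm a b, by rw [pair_conj, ha, hb]⟩
    · obtain ⟨a, ha⟩ := isConj_iff.mp h1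
      obtain ⟨b, hb⟩ := isConj_iff.mp h2
      exact isConj_iff.mpr ⟨pairOm b a * swapOm, by rw [pairswap_conj, ha, hb]⟩
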